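/- Characterization of ground pairs by the superdifferential of E: let ρ ∈ B satisfy the Fenchel–Moreau representation F(ρ) = sup_{w ∈ B'} (E(w) − ⟨w,ρ⟩), with the supremum finite. Then for every v ∈ B', (v,ρ) ∈ GP if and only if ρ is a supergradient of E at v, i.e. if and only if E(w) ≤ E(v) + ⟨w − v, ρ⟩ for all w ∈ B'. -/
import Mathlib


/-- Excess energy `Γ(v,ρ) := F(ρ) + ⟨v,ρ⟩ − E(v)`. -/
noncomputable def Gam {B : Type*} [NormedAddCommGroup B] [NormedSpace ℝ B]
    (F : B → EReal) (E : (B →L[ℝ] ℝ) → ℝ) (v : B →L[ℝ] ℝ) (ρ : B) : EReal :=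
  F ρ + (v ρ : EReal) - (E v : EReal)

/-- Ground pairs are characterized by the superdifferential of `E`:
if `F(ρ) = sup_w (E(w) − ⟨w,ρ⟩)` with the supremum finite, then
`(v,ρ) ∈ GP ↔ ρ ∈ ∂̄E(v)`. -/
theorem ground_pair_iff_supergradient
    {B : Type*} [NormedAddCommGroup B] [NormedSpace ℝ B]
    (F : B → EReal) (hFbot : ∀ σ : B, F σ ≠ ⊥)
    (E : (B →L[ℝ] ℝ) → ℝ)
    (hE : ∀ v : B →L[ℝ] ℝ, (⨅ σ : B, F σ + (v σ : EReal)) = (E v : EReal))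
    (ρ : B)
    (hrep : F ρ = ⨆ w : B →L[ℝ] ℝ, ((E w - w ρ : ℝ) : EReal))
    (hfin : F ρ ≠ ⊤) :
    ∀ v : B →L[ℝ] ℝ,
      Gam F E v ρ = 0 ↔ ∀ w : B →L[ℝ] ℝ, E w ≤ E v + (w - v) ρ := by
  intro v
  set f : ℝ := (F ρ).toReal with hf
  have hFρ : F ρ = (f : EReal) := (EReal.coe_toReal hfin (hFbot ρ)).symm
  -- each term of the sup is ≤ f
  have hA : ∀ w : B →L[ℝ] ℝ, E w - w ρ ≤ f := by
    intro w
    have := le_iSup (fun w : B →L[ℝ] ℝ => ((E w - w ρ : ℝ) : EReal)) w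
    rw [← hrep, hFρ] at this
    exact_mod_cast this
  -- E v ≤ f + v ρ
  have hB : E v ≤ f + v ρ := by
    have := iInf_le (fun σ : B => F σ + (v σ : EReal)) ρ
    rw [hE v, hFρ] at this
    exact_mod_cast this
  have hGam : Gam F E v ρ = ((f + v ρ - E v : ℝ) : EReal) := by
    simp [Gam, hFρ, EReal.coe_sub, EReal.coe_add]
  rw [hGam]
  constructor
  · intro h w
    have h0 : f + v ρ - E v = 0 := by exact_mod_cast h
    have hw := hA w
    have : (w - v) ρ = w ρ - v ρ := by simp
    rw [this]
    linarith
  · intro h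
    have hC : f ≤ E v - v ρ := by
      have hsup : (⨆ w : B →L[ℝ] ℝ, ((E w - w ρ : ℝ) : EReal)) ≤ ((E v - v ρ : ℝ) : EReal) := by
        apply iSup_le
        intro w
        have hw := h w
        have : (w - v) ρ = w ρ - v ρ := by simp
        rw [this] at hw
        exact_mod_cast (by linarith : E w - w ρ ≤ E v - v ρ)
      rw [← hrep, hFρ] at hsup
      exact_mod_cast hsup
    have : f + v ρ - E v = 0 := by linarith
    exact_mod_cast this
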